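/- Let X be a convex subset of a uniformly convex real normed space, and let P, A ⊆ X be nonempty subsets with d(P, A) := inf{‖p − a‖ : p ∈ P, a ∈ A} > 0. Then the bisector {x ∈ X : d(x, P) = d(x, A)} has empty interior with respect to the subspace topology on X; in particular, it cannot contain any ball of X. -/

import Mathlib

open Metric

set_option maxHeartbeats 1600000 in
/-- The bisector of two nonempty positively separated sites `P, A` contained in a convex
subset `X` of a uniformly convex real normed space has empty interior in the subspace
topology on `X` (so it cannot contain any ball of `X`). -/
theorem bisector_interior_empty
    {E : Type*} [NormedAddCommGroup E] [NormedSpace ℝ E] [UniformConvexSpace E]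
    (X : Set E) (hX : Convex ℝ X) (P A : Set E)
    (hP : P.Nonempty) (hA : A.Nonempty) (hPX : P ⊆ X) (hAX : A ⊆ X)
    (hsep : 0 < sInf {r : ℝ | ∃ p ∈ P, ∃ a ∈ A, r = dist p a}) :
    interior {x : X | Metric.infDist (x : E) P = Metric.infDist (x : E) A} = ∅ := by
  set ε0 := sInf {r : ℝ | ∃ p ∈ P, ∃ a ∈ A, r = dist p a} with hε0def
  have hε0le : ∀ p ∈ P, ∀ a ∈ A, ε0 ≤ dist p a := by
    intro p hp a ha
    apply csInf_le
    · exact ⟨0, by rintro r ⟨p', _, a', _, rfl⟩; exact dist_nonneg⟩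
    · exact ⟨p, hp, a, ha, rfl⟩
  set S : Set X := {x : X | Metric.infDist (x : E) P = Metric.infDist (x : E) A} with hSdef
  by_contra h
  obtain ⟨z, hz⟩ := Set.nonempty_iff_ne_empty.2 h
  obtain ⟨r, hr, hball⟩ := Metric.mem_nhds_iff.1 (mem_interior_iff_mem_nhds.1 hz)
  have hzS : Metric.infDist (z : E) P = Metric.infDist (z : E) A := by
    have : z ∈ S := interior_subset hz
    exact this
  set d := Metric.infDist (z : E) P with hddef
  -- bisector property within the ball
  have Hbis : ∀ y ∈ X, dist y (z : E) < r →
      Metric.infDist y P = Metric.infDist y A := by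
    intro y hy hlt
    have hmem : (⟨y, hy⟩ : X) ∈ Metric.ball z r := by
      rw [Metric.mem_ball, Subtype.dist_eq]
      exact hlt
    have : (⟨y, hy⟩ : X) ∈ S := hball hmem
    exact this
  -- d ≥ ε0 / 2
  have hd2 : ε0 ≤ 2 * d := by
    have key : ∀ η : ℝ, 0 < η → ε0 ≤ 2 * d + 2 * η := by
      intro η hη
      obtain ⟨p, hp, hpd⟩ := (Metric.infDist_lt_iff hP).1
        (by linarith : Metric.infDist (z : E) P < d + η)
      obtain ⟨a, ha, had⟩ := (Metric.infDist_lt_iff hA).1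
        (by rw [← hzS]; linarith : Metric.infDist (z : E) A < d + η)
      have := hε0le p hp a ha
      have htri : dist p a ≤ dist (z : E) p + dist (z : E) a := by
        calc dist p a ≤ dist p (z : E) + dist (z : E) a := dist_triangle _ _ _
        _ = dist (z : E) p + dist (z : E) a := by rw [dist_comm]
      linarith
    by_contra hc
    push_neg at hc
    have := key ((ε0 - 2 * d) / 4) (by linarith)
    linarith
  have hd : 0 < d := by linarith
  set s := min (r / 2) (d / 2) with hsdef
  have hs : 0 < s := lt_min (by linarith) (by linarith)
  have hsr : s < r := (min_le_left _ _).trans_lt (by linarith)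
  have hsd : s ≤ d / 2 := min_le_right _ _
  -- uniform convexity modulus
  have hε' : 0 < ε0 / (2 * (d + 1)) := by positivity
  obtain ⟨δu, hδu, hUC⟩ := exists_forall_sphere_dist_add_le_two_sub E hε'
  set δ := min (min (ε0 / 8) (1 / 2)) (s * δu / 4) with hδdef
  have hδ : 0 < δ := lt_min (lt_min (by linarith) one_half_pos) (by positivity)
  have hδ1 : δ ≤ ε0 / 8 := (min_le_left _ _).trans (min_le_left _ _)
  have hδ2 : δ ≤ 1 / 2 := (min_le_left _ _).trans (min_le_right _ _)
  have hδ3 : δ ≤ s * δu / 4 := min_le_right _ _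
  clear_value ε0 d s δ
  -- choose p
  obtain ⟨p, hp, hpd⟩ := (Metric.infDist_lt_iff hP).1
    (by linarith : Metric.infDist (z : E) P < d + δ)
  have hpx : d ≤ ‖p - (z : E)‖ := by
    rw [← dist_eq_norm, dist_comm (p) (z : E), hddef]
    exact Metric.infDist_le_dist_of_mem hp
  set npz := ‖p - (z : E)‖ with hnpzdef
  have hnpz : 0 < npz := lt_of_lt_of_le hd hpx
  have hpdd : npz < d + δ := by
    rw [hnpzdef, ← dist_eq_norm, dist_comm p (z : E)] at *
    exact hpd
  set u : E := npz⁻¹ • (p - (z : E)) with hudef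
  have hu : ‖u‖ = 1 := by
    rw [hudef, norm_smul, norm_inv, norm_norm]
    field_simp
    exact div_self (ne_of_gt hnpz)
  have hpzu : npz • u = p - (z : E) := by
    rw [hudef, smul_smul]
    rw [mul_inv_cancel₀ hnpz.ne', one_smul]
  set y := (z : E) + s • u with hydef
  have hsnpz : s ≤ npz := le_trans (by linarith : s ≤ d) hpx
  have hyX : y ∈ X := by
    have ht0 : (0:ℝ) ≤ s / npz := by positivity
    have ht1 : (0:ℝ) ≤ 1 - s / npz := by
      rw [sub_nonneg, div_le_one hnpz]; exact hsnpz
    have hcx := hX z.2 (hPX hp) ht1 ht0 (by ring)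
    have : (1 - s / npz) • (z : E) + (s / npz) • p = y := by
      rw [hydef]
      have : s • u = (s / npz) • (p - (z : E)) := by
        rw [hudef, smul_smul, div_eq_mul_inv]
      rw [this]
      module
    rwa [this] at hcx
  have hdyz : dist y (z : E) = s := by
    rw [hydef, dist_eq_norm, add_sub_cancel_left, norm_smul, hu,
      Real.norm_eq_abs, abs_of_pos hs, mul_one]
  have hybis : Metric.infDist y P = Metric.infDist y A :=
    Hbis y hyX (by rw [hdyz]; exact hsr)
  have hyp : dist y p = npz - s := by
    rw [dist_eq_norm]
    have : y - p = (s - npz) • u := by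
      rw [hydef]
      have : p = (z : E) + npz • u := by rw [hpzu]; abel
      rw [this]
      module
    rw [this, norm_smul, hu, mul_one, Real.norm_eq_abs, abs_of_nonpos (by linarith),
      neg_sub]
  have hyA : Metric.infDist y A < d + δ - s := by
    rw [← hybis]
    calc Metric.infDist y P ≤ dist y p := Metric.infDist_le_dist_of_mem hp
    _ = npz - s := hyp
    _ < d + δ - s := by linarith
  obtain ⟨a, ha, hya⟩ := (Metric.infDist_lt_iff hA).1
    (by linarith : Metric.infDist y A < d + 2 * δ - s)
  set b := a - y with hbdef
  have hbnorm : ‖b‖ < d + 2 * δ - s := by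
    rw [hbdef, ← dist_eq_norm, dist_comm]; exact hya
  have hwlb : d ≤ ‖a - (z : E)‖ := by
    rw [← dist_eq_norm, dist_comm]
    calc d = Metric.infDist (z : E) A := hzS
    _ ≤ dist (z : E) a := Metric.infDist_le_dist_of_mem ha
  have hbsu : b + s • u = a - (z : E) := by rw [hbdef, hydef]; abel
  have hblb : d - s ≤ ‖b‖ := by
    have : ‖a - (z : E)‖ ≤ ‖b‖ + ‖s • u‖ := by
      rw [← hbsu]; exact norm_add_le _ _
    rw [norm_smul, hu, mul_one, Real.norm_eq_abs, abs_of_pos hs] at this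
    linarith
  have hbpos : 0 < ‖b‖ := by
    have : s ≤ d / 2 := hsd
    linarith
  set bh : E := ‖b‖⁻¹ • b with hbhdef
  have hbh : ‖bh‖ = 1 := by
    rw [hbhdef, norm_smul, norm_inv, norm_norm]
    field_simp
  have hbhb : ‖b‖ • bh = b := by
    rw [hbhdef, smul_smul, mul_inv_cancel₀ hbpos.ne', one_smul]
  -- key: bh + u has norm close to 2
  have hkey : 2 - δu < ‖bh + u‖ := by
    have hdecomp : bh + u = s⁻¹ • (b + s • u) - (s⁻¹ - ‖b‖⁻¹) • b := by
      rw [hbhdef]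
      match_scalars <;> (field_simp; try ring)
    have h1 : ‖s⁻¹ • (b + s • u)‖ = s⁻¹ * ‖a - (z : E)‖ := by
      rw [hbsu, norm_smul, Real.norm_eq_abs, abs_of_pos (by positivity)]
    have h2 : ‖(s⁻¹ - ‖b‖⁻¹) • b‖ = ‖b‖ / s - 1 := by
      have hcoef : (0:ℝ) ≤ s⁻¹ - ‖b‖⁻¹ := by
        rw [sub_nonneg]
        exact inv_anti₀ hs (by linarith)
      rw [norm_smul, Real.norm_eq_abs, abs_of_nonneg hcoef, sub_mul,
        inv_mul_eq_div, inv_mul_cancel₀ hbpos.ne']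
    have heq : s⁻¹ * ‖a - (z : E)‖ - (‖b‖ / s - 1)
        = (‖a - (z : E)‖ - ‖b‖ + s) / s := by
      field_simp
      ring
    have hstep : 2 - δu < s⁻¹ * ‖a - (z : E)‖ - (‖b‖ / s - 1) := by
      rw [heq, lt_div_iff₀ hs]
      nlinarith [hδ3, hwlb, hbnorm, hδu, hs]
    calc 2 - δu < s⁻¹ * ‖a - (z : E)‖ - (‖b‖ / s - 1) := hstep
    _ = ‖s⁻¹ • (b + s • u)‖ - ‖(s⁻¹ - ‖b‖⁻¹) • b‖ := by rw [h1, h2]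
    _ ≤ ‖bh + u‖ := by rw [hdecomp]; exact norm_sub_norm_le _ _
  -- uniform convexity forces bh ≈ u
  have hclose : ‖bh - u‖ < ε0 / (2 * (d + 1)) := by
    by_contra hc
    push_neg at hc
    have := hUC hbh hu hc
    linarith
  -- now a is close to p, contradiction
  have hapdec : a - p = ‖b‖ • (bh - u) + (‖b‖ + s - npz) • u := by
    have hp' : p = (z : E) + npz • u := by rw [hpzu]; abel
    have ha' : a = (z : E) + b + s • u := by
      have := hbsu
      have : a = (b + s • u) + (z : E) := by rw [hbsu]; abel
      rw [this]; abel
    rw [hp', ha', smul_sub, hbhb, sub_smul, add_smul]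
    abel
  have hnab : ‖a - p‖ < ε0 := by
    have h1 : ‖‖b‖ • (bh - u)‖ < ε0 / 2 := by
      rw [norm_smul, Real.norm_eq_abs, abs_of_pos hbpos]
      calc ‖b‖ * ‖bh - u‖ ≤ (d + 1) * ‖bh - u‖ := by
            apply mul_le_mul_of_nonneg_right _ (norm_nonneg _)
            linarith
      _ < (d + 1) * (ε0 / (2 * (d + 1))) := by
            apply mul_lt_mul_of_pos_left hclose (by linarith)
      _ = ε0 / 2 := by field_simp
    have h2 : ‖(‖b‖ + s - npz) • u‖ ≤ 2 * δ := by
      rw [norm_smul, hu, mul_one, Real.norm_eq_abs, abs_le]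
      constructor <;> linarith
    calc ‖a - p‖ ≤ ‖‖b‖ • (bh - u)‖ + ‖(‖b‖ + s - npz) • u‖ := by
          rw [hapdec]; exact norm_add_le _ _
    _ < ε0 / 2 + 2 * δ := by linarith
    _ ≤ ε0 := by linarith
  have := hε0le p hp a ha
  rw [dist_eq_norm] at this
  have : ε0 ≤ ‖a - p‖ := by rwa [← norm_neg, neg_sub] at this
  linarith
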